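/- arXiv:quant-ph/0312204 — 6 statements merged into one kernel-verified Lean document; each statement's English description precedes it below -/
import Mathlib

section
/- In a quantum system of dimension N ≥ 2, the number of pairwise mutually unbiased orthonormal bases of ℂ^N is at most N+1. -/
open scoped ComplexConjugate

noncomputable def Pmat {N : ℕ} (a : EuclideanSpace ℂ (Fin N)) :
    EuclideanSpace ℂ (Fin N × Fin N) := WithLp.toLp 2 (fun p => a p.1 * conj (a p.2))

noncomputable def Imat (N : ℕ) : EuclideanSpace ℂ (Fin N × Fin N) :=
  WithLp.toLp 2 (fun p => if p.1 = p.2 then 1 else 0)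

noncomputable def Qmat {N : ℕ} (a : EuclideanSpace ℂ (Fin N)) :
    EuclideanSpace ℂ (Fin N × Fin N) := Pmat a - (N : ℂ)⁻¹ • Imat N

lemma inner_Pmat_Pmat {N : ℕ} (a b : EuclideanSpace ℂ (Fin N)) :
    (inner ℂ (Pmat a) (Pmat b) : ℂ) = (inner ℂ a b : ℂ) * conj (inner ℂ a b : ℂ) := by
  simp only [Pmat, PiLp.inner_apply, PiLp.toLp_apply, RCLike.inner_apply, map_sum, map_mul, Complex.conj_conj,
    Fintype.sum_prod_type, Finset.sum_mul_sum]
  apply Finset.sum_congr rfl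
  intro k _
  apply Finset.sum_congr rfl
  intro l _
  ring

lemma inner_Pmat_Imat {N : ℕ} (a : EuclideanSpace ℂ (Fin N)) :
    (inner ℂ (Pmat a) (Imat N) : ℂ) = (inner ℂ a a : ℂ) := by
  simp only [Pmat, Imat, PiLp.inner_apply, PiLp.toLp_apply, RCLike.inner_apply, map_mul, Complex.conj_conj,
    Fintype.sum_prod_type]
  simp [mul_comm]

lemma inner_Imat_Pmat {N : ℕ} (a : EuclideanSpace ℂ (Fin N)) :
    (inner ℂ (Imat N) (Pmat a) : ℂ) = (inner ℂ a a : ℂ) := by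
  simp only [Pmat, Imat, PiLp.inner_apply, PiLp.toLp_apply, RCLike.inner_apply, map_mul,
    Fintype.sum_prod_type]
  simp [mul_comm]

lemma inner_Imat_Imat {N : ℕ} : (inner ℂ (Imat N) (Imat N) : ℂ) = N := by
  simp only [Imat, PiLp.inner_apply, PiLp.toLp_apply, RCLike.inner_apply, Fintype.sum_prod_type]
  simp

lemma inner_Qmat_Qmat {N : ℕ} (hN : (N : ℂ) ≠ 0) (a b : EuclideanSpace ℂ (Fin N))
    (ha : (inner ℂ a a : ℂ) = 1) (hb : (inner ℂ b b : ℂ) = 1) :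
    (inner ℂ (Qmat a) (Qmat b) : ℂ)
      = (inner ℂ a b : ℂ) * conj (inner ℂ a b : ℂ) - (N : ℂ)⁻¹ := by
  simp only [Qmat, inner_sub_left, inner_sub_right, inner_smul_left, inner_smul_right,
    inner_Pmat_Pmat, inner_Pmat_Imat, inner_Imat_Pmat, inner_Imat_Imat, ha, hb, map_inv₀,
    Complex.conj_natCast]
  field_simp
  ring

lemma inner_Imat_Qmat {N : ℕ} (hN : (N : ℂ) ≠ 0) (b : EuclideanSpace ℂ (Fin N))
    (hb : (inner ℂ b b : ℂ) = 1) : (inner ℂ (Imat N) (Qmat b) : ℂ) = 0 := by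
  simp only [Qmat, inner_sub_right, inner_smul_right, inner_Imat_Pmat, inner_Imat_Imat, hb]
  field_simp
  ring

lemma inner_Qmat_Imat {N : ℕ} (hN : (N : ℂ) ≠ 0) (a : EuclideanSpace ℂ (Fin N))
    (ha : (inner ℂ a a : ℂ) = 1) : (inner ℂ (Qmat a) (Imat N) : ℂ) = 0 := by
  simp only [Qmat, inner_sub_left, inner_smul_left, inner_Pmat_Imat, inner_Imat_Imat, ha,
    map_inv₀, Complex.conj_natCast]
  field_simp
  ring

/-- In dimension `N ≥ 2`, a family of pairwise mutually unbiased orthonormal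
bases of `ℂ^N` has at most `N + 1` members. -/
theorem mub_card_le (N M : ℕ) (hN : 2 ≤ N)
    (B : Fin M → Fin N → EuclideanSpace ℂ (Fin N))
    (horth : ∀ m, Orthonormal ℂ (B m))
    (hmub : ∀ m m' : Fin M, m ≠ m' → ∀ i j,
      ‖(inner ℂ (B m i) (B m' j) : ℂ)‖ = 1 / Real.sqrt N) :
    M ≤ N + 1 := by
  have hN0 : (N : ℂ) ≠ 0 := Nat.cast_ne_zero.mpr (by omega)
  have hNR : (0 : ℝ) < N := by positivity
  set em : Fin (N - 1) → Fin N := Fin.castLE (Nat.sub_le N 1) with hem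
  have hemi : Function.Injective em := Fin.castLE_injective _
  have hite : ∀ m i j, (inner ℂ (B m i) (B m j) : ℂ) = if i = j then 1 else 0 :=
    fun m => orthonormal_iff_ite.mp (horth m)
  have hunit : ∀ m i, (inner ℂ (B m i) (B m i) : ℂ) = 1 := by
    intro m i; rw [hite m i i, if_pos rfl]
  -- inner products of P's
  have hPP : ∀ m m' i j, (inner ℂ (Pmat (B m i)) (Pmat (B m' j)) : ℂ)
      = if m = m' then (if i = j then 1 else 0) else (N : ℂ)⁻¹ := by
    intro m m' i j
    rw [inner_Pmat_Pmat]
    by_cases h : m = m'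
    · subst h
      rw [hite m i j, if_pos rfl]
      by_cases hij : i = j <;> simp [hij]
    · rw [if_neg h, Complex.mul_conj]
      have hn := hmub m m' h i j
      rw [Complex.normSq_eq_norm_sq, hn]
      rw [div_pow, one_pow, Real.sq_sqrt hNR.le]
      push_cast
      rw [one_div]
  -- inner products of Q's
  have hQQ : ∀ m m' i j, (inner ℂ (Qmat (B m (em i))) (Qmat (B m' (em j))) : ℂ)
      = if m = m' then ((if i = j then 1 else 0) - (N : ℂ)⁻¹) else 0 := by
    intro m m' i j
    rw [inner_Qmat_Qmat hN0 _ _ (hunit _ _) (hunit _ _), ← inner_Pmat_Pmat, hPP]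
    by_cases h : m = m'
    · subst h; simp [hemi.eq_iff]
    · simp [h]
  -- the linearly independent family
  set v : (Fin M × Fin (N - 1)) ⊕ Unit → EuclideanSpace ℂ (Fin N × Fin N) :=
    Sum.elim (fun p => Qmat (B p.1 (em p.2))) (fun _ => Imat N) with hv
  have hli : LinearIndependent ℂ v := by
    rw [Fintype.linearIndependent_iff]
    intro g hg
    have hIv : (inner ℂ (Imat N) (∑ i, g i • v i) : ℂ) = 0 := by rw [hg, inner_zero_right]
    rw [inner_sum] at hIv
    simp only [inner_smul_right, hv, Fintype.sum_sum_type, Sum.elim_inl, Sum.elim_inr,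
      inner_Imat_Qmat hN0 _ (hunit _ _), inner_Imat_Imat, mul_zero, Finset.sum_const_zero,
      zero_add, Finset.univ_unique, Finset.sum_singleton] at hIv
    have hginr : g (Sum.inr ()) = 0 := by
      rcases mul_eq_zero.mp hIv with h | h
      · exact h
      · exact absurd h hN0
    -- now the inl components
    have hkey : ∀ m j, g (Sum.inl (m, j))
        = (∑ i, g (Sum.inl (m, i))) * (N : ℂ)⁻¹ := by
      intro m j
      have hQv : (inner ℂ (Qmat (B m (em j))) (∑ i, g i • v i) : ℂ) = 0 := by
        rw [hg, inner_zero_right]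
      rw [inner_sum] at hQv
      simp only [inner_smul_right, hv, Fintype.sum_sum_type, Sum.elim_inl, Sum.elim_inr,
        inner_Qmat_Imat hN0 _ (hunit _ _), mul_zero, Finset.univ_unique,
        Finset.sum_singleton, add_zero, Fintype.sum_prod_type] at hQv
      simp only [hQQ, mul_ite, mul_zero] at hQv
      have hsplit : (∑ x : Fin M, ∑ i : Fin (N - 1),
          if m = x then g (Sum.inl (x, i)) * ((if j = i then 1 else 0) - (N : ℂ)⁻¹) else 0)
          = g (Sum.inl (m, j)) - (∑ i, g (Sum.inl (m, i))) * (N : ℂ)⁻¹ := by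
        rw [Finset.sum_eq_single_of_mem m (Finset.mem_univ m)]
        · simp only [eq_self_iff_true, if_true, mul_sub, Finset.sum_sub_distrib, mul_ite,
            mul_one, mul_zero]
          rw [Finset.sum_ite_eq Finset.univ j (fun i => g (Sum.inl (m, i)))]
          simp [Finset.sum_mul]
        · intro x _ hx
          simp [Ne.symm hx]
      rw [hsplit] at hQv
      exact sub_eq_zero.mp hQv
    intro p
    rcases p with ⟨m, j⟩ | u
    · have hS : (∑ i, g (Sum.inl (m, i))) = 0 := by
        have h1 : (∑ i, g (Sum.inl (m, i)))
            = (↑(N - 1) : ℂ) * ((∑ i, g (Sum.inl (m, i))) * (N : ℂ)⁻¹) := by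
          calc (∑ i : Fin (N-1), g (Sum.inl (m, i)))
              = ∑ i : Fin (N-1), (∑ i', g (Sum.inl (m, i'))) * (N : ℂ)⁻¹ :=
                Finset.sum_congr rfl fun i _ => hkey m i
            _ = (↑(N - 1) : ℂ) * ((∑ i', g (Sum.inl (m, i'))) * (N : ℂ)⁻¹) := by
                rw [Finset.sum_const, Finset.card_univ, Fintype.card_fin, nsmul_eq_mul]
        have hc : ((N - 1 : ℕ) : ℂ) = (N : ℂ) - 1 := by
          push_cast [Nat.cast_sub (by omega : 1 ≤ N)]; ring
        set S := ∑ i, g (Sum.inl (m, i)) with hSdef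
        rw [hc] at h1
        field_simp at h1
        linear_combination h1
      rw [hkey m j, hS, zero_mul]
    · cases u; exact hginr
  have hcard := hli.fintype_card_le_finrank
  simp only [Fintype.card_sum, Fintype.card_prod, Fintype.card_fin, Fintype.card_unit,
    finrank_euclideanSpace, Fintype.card_prod, Fintype.card_fin] at hcard
  obtain ⟨K, rfl⟩ : ∃ K, N = K + 1 := ⟨N - 1, by omega⟩
  simp only [Nat.add_sub_cancel] at hcard
  nlinarith [hcard, hN]
end

section
/- For an odd prime p, the p bases of ℂ^p given by (v_k^{(r)})_l = (1/√p) e^{(2πi/p)(r l² + k l)} for r, k, l ∈ 𝔽_p, together with the standard basis, form a set of p+1 mutually unbiased bases. -/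
open scoped Real

namespace WFaux

variable {p : ℕ} [NeZero p]

noncomputable def ψ : AddChar (ZMod p) ℂ := ZMod.stdAddChar

lemma psi_apply (t : ZMod p) :
    ψ t = Complex.exp (2 * π * Complex.I * ((t.val : ℕ) : ℂ) / p) := by
  simp [ψ, ZMod.stdAddChar_apply, ZMod.toCircle_apply]

lemma psi_norm (t : ZMod p) : ‖ψ t‖ = 1 := by
  simp [ψ, ZMod.stdAddChar_apply, Circle.norm_coe]

lemma psi_conj (t : ZMod p) : (starRingEnd ℂ) (ψ t) = ψ (-t) := by
  have hne : (ψ t) ≠ 0 := by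
    intro h
    simpa [h] using psi_norm t
  have h1 : ψ (-t) * ψ t = 1 := by
    rw [← AddChar.map_add_eq_mul]; simp
  have h2 : (starRingEnd ℂ) (ψ t) * ψ t = 1 := by
    rw [mul_comm, Complex.mul_conj, Complex.normSq_eq_norm_sq, psi_norm]
    norm_num
  exact mul_right_cancel₀ hne (h2.trans h1.symm)

lemma psi_sum (hp : p.Prime) (c : ZMod p) :
    ∑ x : ZMod p, ψ (x * c) = if c = 0 then (p : ℂ) else 0 := by
  have := AddChar.sum_mulShift (ψ := (ZMod.stdAddChar : AddChar (ZMod p) ℂ)) c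
    (ZMod.isPrimitive_stdAddChar p)
  simpa [ψ, ZMod.card] using this

lemma gauss_normSq (hp : p.Prime) (hodd : Odd p) {a : ZMod p} (ha : a ≠ 0) (b : ZMod p) :
    (∑ l : ZMod p, ψ (a * l ^ 2 + b * l)) *
      (starRingEnd ℂ) (∑ l : ZMod p, ψ (a * l ^ 2 + b * l)) = (p : ℂ) := by
  haveI := Fact.mk hp
  have h2 : (2 : ZMod p) ≠ 0 := by
    have hd : ¬ ((p:ℕ) ∣ 2) := by
      intro h
      have := (Nat.prime_dvd_prime_iff_eq hp Nat.prime_two).mp h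
      subst this
      simp [Nat.odd_iff] at hodd
    have := (ZMod.natCast_eq_zero_iff 2 p).not.mpr hd
    simpa using this
  rw [map_sum]
  simp_rw [psi_conj]
  rw [Finset.sum_mul_sum, Finset.sum_comm]
  have step : ∀ m : ZMod p,
      ∑ l : ZMod p, ψ (a * l ^ 2 + b * l) * ψ (-(a * m ^ 2 + b * m))
        = ∑ d : ZMod p, ψ (a * d ^ 2 + b * d) * ψ (m * (2 * a * d)) := by
    intro m
    rw [← Equiv.sum_comp (Equiv.addLeft m)
      (fun l => ψ (a * l ^ 2 + b * l) * ψ (-(a * m ^ 2 + b * m)))]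
    refine Finset.sum_congr rfl fun d _ => ?_
    simp only [Equiv.coe_addLeft]
    rw [← AddChar.map_add_eq_mul, ← AddChar.map_add_eq_mul]
    congr 1
    ring
  simp_rw [step]
  rw [Finset.sum_comm]
  have inner : ∀ d : ZMod p,
      ∑ m : ZMod p, ψ (a * d ^ 2 + b * d) * ψ (m * (2 * a * d))
        = ψ (a * d ^ 2 + b * d) * (if (2 * a * d) = 0 then (p:ℂ) else 0) := by
    intro d
    rw [← Finset.mul_sum, psi_sum hp]
  simp_rw [inner]
  have hif : ∀ d : ZMod p, (2 * a * d = 0) ↔ d = 0 := by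
    intro d
    constructor
    · intro h
      rcases mul_eq_zero.mp h with h' | h'
      · exact absurd h' (mul_ne_zero h2 ha)
      · exact h'
    · rintro rfl; ring
  simp_rw [hif]
  simp

end WFaux

/-- For an odd prime `p`, the `p` bases `(v r k) l = (1/√p) e^{(2πi/p)(r l² + k l)}`
(indices in `𝔽_p = ZMod p`), together with the standard basis, form `p + 1`
mutually unbiased bases of `ℂ^p`. -/
theorem wootters_fields_odd_prime (p : ℕ) [NeZero p] (hp : p.Prime) (hodd : Odd p)
    (v : ZMod p → ZMod p → EuclideanSpace ℂ (ZMod p))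
    (hv : ∀ r k l : ZMod p,
      v r k l = (1 / Real.sqrt p : ℝ) *
        Complex.exp (2 * π * Complex.I * ((r * l ^ 2 + k * l).val : ℕ) / p)) :
    (∀ r : ZMod p, Orthonormal ℂ (v r)) ∧
    (∀ r k l : ZMod p, ‖v r k l‖ = 1 / Real.sqrt p) ∧
    (∀ r r' : ZMod p, r ≠ r' → ∀ k k' : ZMod p,
      ‖(inner ℂ (v r k) (v r' k') : ℂ)‖ = 1 / Real.sqrt p) := by
  haveI := Fact.mk hp
  have hp0 : (0:ℝ) < p := by exact_mod_cast hp.pos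
  have hpC : (p:ℂ) ≠ 0 := by exact_mod_cast hp0.ne'
  have hsq : Real.sqrt p * Real.sqrt p = p := Real.mul_self_sqrt hp0.le
  have hs0 : Real.sqrt p ≠ 0 := by positivity
  set c : ℝ := 1 / Real.sqrt p with hc
  have hv' : ∀ r k l : ZMod p, v r k l = (c:ℂ) * WFaux.ψ (r * l ^ 2 + k * l) := by
    intro r k l; rw [hv, WFaux.psi_apply]
  have hcsq : (c:ℂ) * (c:ℂ) = (p:ℂ)⁻¹ := by
    have h1 : c * c = (p:ℝ)⁻¹ := by
      rw [hc, div_mul_div_comm, one_mul, hsq, one_div]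
    calc (c:ℂ) * (c:ℂ) = ((c * c : ℝ) : ℂ) := by push_cast; ring
      _ = (p:ℂ)⁻¹ := by rw [h1]; push_cast; ring
  have hinner : ∀ r k r' k' : ZMod p,
      (inner ℂ (v r k) (v r' k') : ℂ)
        = (p:ℂ)⁻¹ * ∑ l : ZMod p, WFaux.ψ ((r' - r) * l ^ 2 + (k' - k) * l) := by
    intro r k r' k'
    rw [PiLp.inner_apply, Finset.mul_sum]
    refine Finset.sum_congr rfl fun l _ => ?_
    rw [hv' r k l, hv' r' k' l, RCLike.inner_apply', map_mul, Complex.conj_ofReal,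
      WFaux.psi_conj]
    calc (c:ℂ) * WFaux.ψ (-(r * l ^ 2 + k * l)) * ((c:ℂ) * WFaux.ψ (r' * l ^ 2 + k' * l))
        = ((c:ℂ) * (c:ℂ)) *
          (WFaux.ψ (-(r * l ^ 2 + k * l)) * WFaux.ψ (r' * l ^ 2 + k' * l)) := by ring
      _ = (p:ℂ)⁻¹ * WFaux.ψ ((r' - r) * l ^ 2 + (k' - k) * l) := by
          rw [hcsq, ← AddChar.map_add_eq_mul]
          congr 2
          ring
  refine ⟨?_, ?_, ?_⟩
  · intro r
    rw [orthonormal_iff_ite]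
    intro k k'
    rw [hinner r k r k']
    have harg : ∀ l : ZMod p, (r - r) * l ^ 2 + (k' - k) * l = l * (k' - k) := by
      intro l; ring
    simp_rw [harg]
    rw [WFaux.psi_sum hp]
    by_cases h : k = k'
    · subst h; simp [hpC, inv_mul_cancel₀]
    · rw [if_neg (sub_ne_zero.mpr (Ne.symm h)), if_neg h, mul_zero]
  · intro r k l
    rw [hv' r k l, norm_mul, Complex.norm_real, Real.norm_eq_abs, WFaux.psi_norm, mul_one, hc]
    rw [abs_of_nonneg (by positivity)]
  · intro r r' hr k k'
    have ha : r' - r ≠ 0 := sub_ne_zero.mpr (Ne.symm hr)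
    set S : ℂ := ∑ l : ZMod p, WFaux.ψ ((r' - r) * l ^ 2 + (k' - k) * l) with hS
    have key : S * (starRingEnd ℂ) S = (p:ℂ) := WFaux.gauss_normSq hp hodd ha (k' - k)
    have hnsq : Complex.normSq S = p := by
      have := key
      rw [Complex.mul_conj] at this
      exact_mod_cast this
    have hnorm : ‖S‖ = Real.sqrt p := by
      rw [Complex.norm_def, hnsq]
    rw [hinner r k r' k', ← hS, norm_mul, hnorm, norm_inv, Complex.norm_natCast]
    rw [eq_div_iff hs0]
    rw [mul_assoc, hsq]
    exact inv_mul_cancel₀ hp0.ne'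
end

section
/- Let R = R₁ × R₂ be a product of rings with unity, N ⊆ R a two-sided nilpotent ideal, and S ⊆ R a multiplicatively closed transversal to N (i.e., S contains exactly one element of each additive coset of N, and S·S ⊆ S). Then (1₁, 0) ∈ S and (0, 1₂) ∈ S and (0,0) ∈ S. -/
private lemma idem_nil_eq_zero {R : Type*} [Ring R] (x : R) (hx : x * x = x)
    (t : ℕ) (ht : 0 < t) (hxt : x ^ t = 0) : x = 0 := by
  have key : ∀ n : ℕ, 0 < n → x ^ n = x := by
    intro n hn
    induction n with
    | zero => omega
    | succ k ih =>
      rcases Nat.eq_zero_or_pos k with hk | hk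
      · simp [hk]
      · rw [pow_succ, ih hk, hx]
  rw [← key t ht, hxt]

private lemma idem_nil_eq_one {R : Type*} [Ring R] (x : R) (hx : x * x = x)
    (t : ℕ) (hxt : (x - 1) ^ t = 0) : x = 1 := by
  have hu : IsUnit x := by
    have : IsNilpotent (x - 1) := ⟨t, hxt⟩
    have := this.isUnit_one_add
    simpa using this
  have : x * x = x * 1 := by rw [hx, mul_one]
  exact hu.mul_left_cancel this

/-- In a product `R = R₁ × R₂` of rings with unity, any multiplicatively closed
transversal `S` to a nilpotent two-sided ideal `N` contains `(1,0)`, `(0,1)`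
and `(0,0)`. -/
theorem transversal_contains_idempotents {R₁ R₂ : Type*} [Ring R₁] [Ring R₂]
    (N : Set (R₁ × R₂))
    (hN0 : (0 : R₁ × R₂) ∈ N)
    (hNadd : ∀ x ∈ N, ∀ y ∈ N, x + y ∈ N)
    (hNneg : ∀ x ∈ N, -x ∈ N)
    (hNmul : ∀ x ∈ N, ∀ r : R₁ × R₂, r * x ∈ N ∧ x * r ∈ N)
    (hNnil : ∀ x ∈ N, ∃ t : ℕ, 0 < t ∧ x ^ t = 0)
    (S : Set (R₁ × R₂))
    (hStrans : ∀ r : R₁ × R₂, ∃! s, s ∈ S ∧ s - r ∈ N)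
    (hSmul : ∀ x ∈ S, ∀ y ∈ S, x * y ∈ S) :
    (((1 : R₁), (0 : R₂)) ∈ S) ∧ (((0 : R₁), (1 : R₂)) ∈ S) ∧
    ((0 : R₁ × R₂) ∈ S) := by
  -- general step: for any idempotent e, the S-representative of e's coset is idempotent
  have key : ∀ e : R₁ × R₂, e * e = e →
      ∃ s ∈ S, s * s = s ∧ s - e ∈ N := by
    intro e he
    obtain ⟨s, ⟨hsS, hsN⟩, huniq⟩ := hStrans e
    refine ⟨s, hsS, ?_, hsN⟩
    have h1 : s * s ∈ S := hSmul s hsS s hsS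
    have h2 : s * s - e ∈ N := by
      have hA : s * (s - e) ∈ N := (hNmul _ hsN s).1
      have hB : (s - e) * e ∈ N := (hNmul _ hsN e).2
      have := hNadd _ hA _ hB
      have heq : s * (s - e) + (s - e) * e = s * s - e := by
        rw [mul_sub, sub_mul, he]; abel
      rwa [heq] at this
    exact huniq _ ⟨h1, h2⟩
  -- case (0,0)
  have h0 : (0 : R₁ × R₂) ∈ S := by
    obtain ⟨s, hsS, hidem, hsN⟩ := key 0 (by simp)
    rw [sub_zero] at hsN
    obtain ⟨t, ht, hst⟩ := hNnil s hsN
    have := idem_nil_eq_zero s hidem t ht hst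
    rwa [this] at hsS
  -- case (1,0)
  have h1 : ((1 : R₁), (0 : R₂)) ∈ S := by
    obtain ⟨s, hsS, hidem, hsN⟩ := key ((1 : R₁), (0 : R₂)) (by simp)
    obtain ⟨t, ht, hst⟩ := hNnil _ hsN
    have h1c : s.1 = 1 := by
      apply idem_nil_eq_one s.1 (by have := congrArg Prod.fst hidem; simpa using this) t
      have := congrArg Prod.fst hst
      simpa using this
    have h2c : s.2 = 0 := by
      apply idem_nil_eq_zero s.2 (by have := congrArg Prod.snd hidem; simpa using this) t ht
      have := congrArg Prod.snd hst
      simpa using this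
    have : s = ((1 : R₁), (0 : R₂)) := Prod.ext h1c h2c
    rwa [this] at hsS
  -- case (0,1)
  have h2 : ((0 : R₁), (1 : R₂)) ∈ S := by
    obtain ⟨s, hsS, hidem, hsN⟩ := key ((0 : R₁), (1 : R₂)) (by simp)
    obtain ⟨t, ht, hst⟩ := hNnil _ hsN
    have h1c : s.1 = 0 := by
      apply idem_nil_eq_zero s.1 (by have := congrArg Prod.fst hidem; simpa using this) t ht
      have := congrArg Prod.fst hst
      simpa using this
    have h2c : s.2 = 1 := by
      apply idem_nil_eq_one s.2 (by have := congrArg Prod.snd hidem; simpa using this) t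
      have := congrArg Prod.snd hst
      simpa using this
    have : s = ((0 : R₁), (1 : R₂)) := Prod.ext h1c h2c
    rwa [this] at hsS
  exact ⟨h1, h2, h0⟩
end

section
/- Let R = R₁ × R₂ be a product of rings with unity, N a nilpotent two-sided ideal of R, and S a multiplicatively closed transversal to N. Then S = (S ∩ R₁) ⊕ (S ∩ R₂), i.e., (s₁, s₂) ∈ S if and only if (s₁, 0) ∈ S and (0, s₂) ∈ S; moreover each S ∩ R_i is multiplicatively closed and is a transversal to N ∩ R_i in R_i, and contains at least two elements. -/
/-- In a product `R = R₁ × R₂` of nonzero rings with unity, a multiplicatively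
closed transversal `S` to a nilpotent two-sided ideal `N` splits:
`S = (S ∩ R₁) ⊕ (S ∩ R₂)`; each `S ∩ Rᵢ` is multiplicatively closed, is a
transversal to `N ∩ Rᵢ` in `Rᵢ`, and has at least two elements. -/
theorem transversal_splits {R₁ R₂ : Type*} [Ring R₁] [Ring R₂]
    [Nontrivial R₁] [Nontrivial R₂]
    (N : Set (R₁ × R₂))
    (hN0 : (0 : R₁ × R₂) ∈ N)
    (hNadd : ∀ x ∈ N, ∀ y ∈ N, x + y ∈ N)
    (hNneg : ∀ x ∈ N, -x ∈ N)
    (hNmul : ∀ x ∈ N, ∀ r : R₁ × R₂, r * x ∈ N ∧ x * r ∈ N)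
    (hNnil : ∀ x ∈ N, ∃ t : ℕ, 0 < t ∧ x ^ t = 0)
    (S : Set (R₁ × R₂))
    (hStrans : ∀ r : R₁ × R₂, ∃! s, s ∈ S ∧ s - r ∈ N)
    (hSmul : ∀ x ∈ S, ∀ y ∈ S, x * y ∈ S) :
    -- splitting
    (∀ s₁ : R₁, ∀ s₂ : R₂, (s₁, s₂) ∈ S ↔
      ((s₁, (0 : R₂)) ∈ S ∧ (((0 : R₁), s₂)) ∈ S)) ∧
    -- S ∩ R₁ is multiplicatively closed and a transversal to N ∩ R₁
    (∀ a b : R₁, (a, (0 : R₂)) ∈ S → (b, (0 : R₂)) ∈ S →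
      (a * b, (0 : R₂)) ∈ S) ∧
    (∀ r₁ : R₁, ∃! a : R₁, (a, (0 : R₂)) ∈ S ∧ (a - r₁, (0 : R₂)) ∈ N) ∧
    -- S ∩ R₂ is multiplicatively closed and a transversal to N ∩ R₂
    (∀ a b : R₂, ((0 : R₁), a) ∈ S → ((0 : R₁), b) ∈ S →
      (((0 : R₁), a * b)) ∈ S) ∧
    (∀ r₂ : R₂, ∃! b : R₂, (((0 : R₁), b)) ∈ S ∧ (((0 : R₁), b - r₂)) ∈ N) ∧
    -- each part has at least two elements
    (∃ a b : R₁, a ≠ b ∧ (a, (0 : R₂)) ∈ S ∧ (b, (0 : R₂)) ∈ S) ∧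
    (∃ a b : R₂, a ≠ b ∧ (((0 : R₁), a)) ∈ S ∧ (((0 : R₁), b)) ∈ S) := by
  -- An idempotent element of N is zero.
  have hidem : ∀ x ∈ N, x * x = x → x = 0 := by
    intro x hx hxx
    obtain ⟨t, ht, hxt⟩ := hNnil x hx
    have hpow : ∀ n, 0 < n → x ^ n = x := by
      intro n
      induction n with
      | zero => intro h; omega
      | succ k ih =>
        intro _
        rcases Nat.eq_zero_or_pos k with hk | hk
        · subst hk; simp
        · rw [pow_succ, ih hk, hxx]
    rw [hpow t ht] at hxt
    exact hxt
  -- 0 ∈ S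
  have h0S : (0 : R₁ × R₂) ∈ S := by
    obtain ⟨z, ⟨hzS, hzN⟩, hu⟩ := hStrans 0
    rw [sub_zero] at hzN
    have h2 : z * z = z :=
      hu (z * z) ⟨hSmul z hzS z hzS, by rw [sub_zero]; exact (hNmul z hzN z).1⟩
    have hz0 := hidem z hzN h2
    rwa [hz0] at hzS
  -- the representative of an idempotent is idempotent
  have hrep : ∀ j : R₁ × R₂, j * j = j → ∃ e, e ∈ S ∧ e - j ∈ N ∧ e * e = e := by
    intro j hj
    obtain ⟨e, ⟨heS, heN⟩, hu⟩ := hStrans j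
    refine ⟨e, heS, heN, ?_⟩
    have h1 := (hNmul _ heN e).1
    have h2 := (hNmul _ heN j).2
    have hsum := hNadd _ h1 _ h2
    have heq : e * (e - j) + (e - j) * j = e * e - j * j := by noncomm_ring
    rw [heq, hj] at hsum
    exact hu (e * e) ⟨hSmul e heS e heS, hsum⟩
  -- (1,0) ∈ S
  have he10 : ((1 : R₁), (0 : R₂)) ∈ S := by
    obtain ⟨e, heS, heN, hee⟩ := hrep ((1 : R₁), (0 : R₂)) (by ext <;> simp)
    have he11 : e.1 * e.1 = e.1 := by
      have := congrArg Prod.fst hee; simpa using this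
    have he22 : e.2 * e.2 = e.2 := by
      have := congrArg Prod.snd hee; simpa using this
    -- second coordinate of e is 0
    have hx : ((0 : R₁), e.2) = ((0 : R₁), (1 : R₂)) * (e - ((1 : R₁), (0 : R₂))) := by
      ext <;> simp
    have hxN : ((0 : R₁), e.2) ∈ N := by
      rw [hx]; exact (hNmul _ heN _).1
    have he2 : e.2 = 0 := by
      have h := hidem _ hxN (by ext <;> simp [he22])
      simpa [Prod.ext_iff] using h
    -- (1,0) - e is an idempotent in N
    have hyN : ((1 : R₁), (0 : R₂)) - e ∈ N := by
      have := hNneg _ heN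
      rwa [neg_sub] at this
    have hyy : (((1 : R₁), (0 : R₂)) - e) * (((1 : R₁), (0 : R₂)) - e)
        = ((1 : R₁), (0 : R₂)) - e := by
      ext
      · simp only [Prod.fst_mul, Prod.fst_sub]
        calc ((1 : R₁) - e.1) * (1 - e.1) = 1 - e.1 - e.1 + e.1 * e.1 := by noncomm_ring
          _ = 1 - e.1 := by rw [he11]; abel
      · simp [he2]
    have hy0 := hidem _ hyN hyy
    have : ((1 : R₁), (0 : R₂)) = e := by
      have := sub_eq_zero.mp hy0; exact this
    rwa [this]
  -- (0,1) ∈ S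
  have he01 : ((0 : R₁), (1 : R₂)) ∈ S := by
    obtain ⟨e, heS, heN, hee⟩ := hrep ((0 : R₁), (1 : R₂)) (by ext <;> simp)
    have he11 : e.1 * e.1 = e.1 := by
      have := congrArg Prod.fst hee; simpa using this
    have he22 : e.2 * e.2 = e.2 := by
      have := congrArg Prod.snd hee; simpa using this
    have hx : (e.1, (0 : R₂)) = ((1 : R₁), (0 : R₂)) * (e - ((0 : R₁), (1 : R₂))) := by
      ext <;> simp
    have hxN : (e.1, (0 : R₂)) ∈ N := by
      rw [hx]; exact (hNmul _ heN _).1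
    have he1 : e.1 = 0 := by
      have h := hidem _ hxN (by ext <;> simp [he11])
      simpa [Prod.ext_iff] using h
    have hyN : ((0 : R₁), (1 : R₂)) - e ∈ N := by
      have := hNneg _ heN
      rwa [neg_sub] at this
    have hyy : (((0 : R₁), (1 : R₂)) - e) * (((0 : R₁), (1 : R₂)) - e)
        = ((0 : R₁), (1 : R₂)) - e := by
      ext
      · simp [he1]
      · simp only [Prod.snd_mul, Prod.snd_sub]
        calc ((1 : R₂) - e.2) * (1 - e.2) = 1 - e.2 - e.2 + e.2 * e.2 := by noncomm_ring
          _ = 1 - e.2 := by rw [he22]; abel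
    have hy0 := hidem _ hyN hyy
    have : ((0 : R₁), (1 : R₂)) = e := by
      have := sub_eq_zero.mp hy0; exact this
    rwa [this]
  -- projections of elements of S stay in S
  have hproj1 : ∀ s : R₁ × R₂, s ∈ S → (s.1, (0 : R₂)) ∈ S := by
    intro s hs
    have := hSmul _ hs _ he10
    have he : s * ((1 : R₁), (0 : R₂)) = (s.1, (0 : R₂)) := by ext <;> simp
    rwa [he] at this
  have hproj2 : ∀ s : R₁ × R₂, s ∈ S → ((0 : R₁), s.2) ∈ S := by
    intro s hs
    have := hSmul _ hs _ he01
    have he : s * ((0 : R₁), (1 : R₂)) = ((0 : R₁), s.2) := by ext <;> simp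
    rwa [he] at this
  -- the splitting
  have hsplit : ∀ s₁ : R₁, ∀ s₂ : R₂, (s₁, s₂) ∈ S ↔
      ((s₁, (0 : R₂)) ∈ S ∧ (((0 : R₁), s₂)) ∈ S) := by
    intro s₁ s₂
    constructor
    · intro h
      exact ⟨hproj1 _ h, hproj2 _ h⟩
    · rintro ⟨h1, h2⟩
      obtain ⟨s, ⟨hsS, hsN⟩, _⟩ := hStrans (s₁, s₂)
      obtain ⟨w, _, hwu⟩ := hStrans (s₁, (0 : R₂))
      have hA : (s.1, (0 : R₂)) = w := by
        refine hwu _ ⟨hproj1 _ hsS, ?_⟩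
        have := (hNmul _ hsN ((1 : R₁), (0 : R₂))).2
        have he : (s - (s₁, s₂)) * ((1 : R₁), (0 : R₂)) = (s.1, (0 : R₂)) - (s₁, (0 : R₂)) := by
          ext <;> simp
        rwa [he] at this
      have hB : (s₁, (0 : R₂)) = w := hwu _ ⟨h1, by simpa using hN0⟩
      obtain ⟨v, _, hvu⟩ := hStrans ((0 : R₁), s₂)
      have hC : ((0 : R₁), s.2) = v := by
        refine hvu _ ⟨hproj2 _ hsS, ?_⟩
        have := (hNmul _ hsN ((0 : R₁), (1 : R₂))).2
        have he : (s - (s₁, s₂)) * ((0 : R₁), (1 : R₂)) = ((0 : R₁), s.2) - ((0 : R₁), s₂) := by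
          ext <;> simp
        rwa [he] at this
      have hD : ((0 : R₁), s₂) = v := hvu _ ⟨h2, by simpa using hN0⟩
      have hs1 : s.1 = s₁ := by
        have := hA.trans hB.symm; exact (Prod.ext_iff.mp this).1
      have hs2 : s.2 = s₂ := by
        have := hC.trans hD.symm; exact (Prod.ext_iff.mp this).2
      have hse : s = (s₁, s₂) := by
        ext
        · exact hs1
        · exact hs2
      rwa [hse] at hsS
  refine ⟨hsplit, ?_, ?_, ?_, ?_, ?_, ?_⟩
  · -- S ∩ R₁ multiplicatively closed
    intro a b ha hb
    have := hSmul _ ha _ hb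
    have he : ((a, (0 : R₂)) : R₁ × R₂) * (b, (0 : R₂)) = (a * b, (0 : R₂)) := by
      ext <;> simp
    rwa [he] at this
  · -- transversal in R₁
    intro r₁
    obtain ⟨s, ⟨hsS, hsN⟩, _⟩ := hStrans (r₁, (0 : R₂))
    have hmem : (s.1, (0 : R₂)) ∈ S := hproj1 _ hsS
    have hdiff : (s.1 - r₁, (0 : R₂)) ∈ N := by
      have := (hNmul _ hsN ((1 : R₁), (0 : R₂))).2
      have he : (s - (r₁, (0 : R₂))) * ((1 : R₁), (0 : R₂)) = (s.1 - r₁, (0 : R₂)) := by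
        ext <;> simp
      rwa [he] at this
    refine ⟨s.1, ⟨hmem, hdiff⟩, ?_⟩
    intro a ⟨haS, haN⟩
    obtain ⟨w, _, hwu⟩ := hStrans (r₁, (0 : R₂))
    have h1 : (a, (0 : R₂)) = w := hwu _ ⟨haS, by simpa using haN⟩
    have h2 : (s.1, (0 : R₂)) = w := hwu _ ⟨hmem, by simpa using hdiff⟩
    have := h1.trans h2.symm
    exact (Prod.ext_iff.mp this).1
  · -- S ∩ R₂ multiplicatively closed
    intro a b ha hb
    have := hSmul _ ha _ hb
    have he : (((0 : R₁), a) : R₁ × R₂) * ((0 : R₁), b) = ((0 : R₁), a * b) := by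
      ext <;> simp
    rwa [he] at this
  · -- transversal in R₂
    intro r₂
    obtain ⟨s, ⟨hsS, hsN⟩, _⟩ := hStrans ((0 : R₁), r₂)
    have hmem : ((0 : R₁), s.2) ∈ S := hproj2 _ hsS
    have hdiff : ((0 : R₁), s.2 - r₂) ∈ N := by
      have := (hNmul _ hsN ((0 : R₁), (1 : R₂))).2
      have he : (s - ((0 : R₁), r₂)) * ((0 : R₁), (1 : R₂)) = ((0 : R₁), s.2 - r₂) := by
        ext <;> simp
      rwa [he] at this
    refine ⟨s.2, ⟨hmem, hdiff⟩, ?_⟩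
    intro b ⟨hbS, hbN⟩
    obtain ⟨w, _, hwu⟩ := hStrans ((0 : R₁), r₂)
    have h1 : ((0 : R₁), b) = w := hwu _ ⟨hbS, by simpa using hbN⟩
    have h2 : ((0 : R₁), s.2) = w := hwu _ ⟨hmem, by simpa using hdiff⟩
    have := h1.trans h2.symm
    exact (Prod.ext_iff.mp this).2
  · -- two elements in S ∩ R₁
    refine ⟨0, 1, zero_ne_one, ?_, he10⟩
    exact h0S
  · -- two elements in S ∩ R₂
    refine ⟨0, 1, zero_ne_one, ?_, he01⟩
    exact h0S
end

section
/- Let R be a finite ring with unity, S ⊆ R multiplicatively closed and a transversal to a nilpotent ideal N of R. If |S| = d₁·d₂ with d₁, d₂ ≥ 2 coprime, then R decomposes as a direct sum R₁ ⊕ R₂ of rings with unity such that |S ∩ R₁| = d₁ and |S ∩ R₂| = d₂. -/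
lemma aux_smooth_dvd_pow (d : ℕ) : ∀ n : ℕ, n ≠ 0 → (∀ p : ℕ, p.Prime → p ∣ n → p ∣ d) → n ∣ d ^ n := by
  intro n
  induction n using Nat.strong_induction_on with
  | _ n ih =>
    intro hn hsm
    rcases eq_or_ne n 1 with rfl | hn1
    · simp
    obtain ⟨p, hp, hpn⟩ := Nat.exists_prime_and_dvd hn1
    obtain ⟨t, rfl⟩ := hpn
    have ht0 : t ≠ 0 := by rintro rfl; simp at hn
    have htlt : t < p * t := by
      have := hp.two_le
      nlinarith [Nat.pos_of_ne_zero ht0]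
    have hts : t ∣ d ^ t := ih t htlt ht0 (fun q hq hqt => hsm q hq (hqt.mul_left p))
    have hpd : p ∣ d := hsm p hp ⟨t, rfl⟩
    have h1 : p * t ∣ d * d ^ t := mul_dvd_mul hpd hts
    refine h1.trans ?_
    rw [← pow_succ']
    exact pow_dvd_pow d (by nlinarith [Nat.pos_of_ne_zero ht0, hp.two_le])

lemma aux_not_dvd (c d p : ℕ) (hc : c ≠ 0) (hp : p.Prime) (hpd : p ∣ d)
    (hpc : p ∣ c / Nat.gcd c (d ^ c)) : False := by
  rcases eq_or_ne d 0 with rfl | hd0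
  · rw [zero_pow hc, Nat.gcd_zero_right, Nat.div_self (Nat.pos_of_ne_zero hc)] at hpc
    exact hp.one_lt.ne' (Nat.eq_one_of_dvd_one hpc)
  set g := Nat.gcd c (d ^ c) with hg
  have hdc0 : d ^ c ≠ 0 := pow_ne_zero _ hd0
  have hg0 : g ≠ 0 := Nat.gcd_ne_zero_left hc
  have hgc : g ∣ c := Nat.gcd_dvd_left _ _
  have hgp0 : g * p ≠ 0 := mul_ne_zero hg0 hp.pos.ne'
  have hgpc : g * p ∣ c := by
    obtain ⟨t, ht⟩ := hpc
    refine ⟨t, ?_⟩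
    rw [mul_assoc, ← ht, Nat.mul_div_cancel' hgc]
  have hgdc : g ∣ d ^ c := Nat.gcd_dvd_right _ _
  have hgpdc : g * p ∣ d ^ c := by
    rw [← Nat.factorization_le_iff_dvd hgp0 hdc0]
    have hfle : g.factorization ≤ (d ^ c).factorization :=
      (Nat.factorization_le_iff_dvd hg0 hdc0).2 hgdc
    rw [Finsupp.le_def] at hfle ⊢
    intro q
    rw [Nat.factorization_mul hg0 hp.pos.ne', hp.factorization]
    rcases eq_or_ne q p with rfl | hqp
    · have h1 : g.factorization q ≤ c.factorization q :=
        (Finsupp.le_def.1 ((Nat.factorization_le_iff_dvd hg0 hc).2 hgc)) q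
      have h2 : c.factorization q < c := Nat.factorization_lt q hc
      have h3 : 1 ≤ d.factorization q := hp.factorization_pos_of_dvd hd0 hpd
      have h4 : (d ^ c).factorization q = c * d.factorization q := by
        rw [Nat.factorization_pow]; rfl
      rw [h4]
      simp only [Finsupp.coe_add, Pi.add_apply, Finsupp.single_eq_same]
      nlinarith
    · simp only [Finsupp.coe_add, Pi.add_apply, Finsupp.single_eq_of_ne' (Ne.symm hqp), add_zero]
      exact hfle q
  have hdg : g * p ∣ g := Nat.dvd_gcd hgpc hgpdc
  have hle := Nat.le_of_dvd (Nat.pos_of_ne_zero hg0) hdg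
  nlinarith [hp.two_le, Nat.pos_of_ne_zero hg0]

/-- Let `R` be a finite ring with unity, `S ⊆ R` multiplicatively closed and a
transversal to a nilpotent ideal `N`. If `|S| = d₁·d₂` with `d₁, d₂ ≥ 2`
coprime, then `R = R₁ ⊕ R₂` is a direct sum of two-sided ideals, each a ring
with its own unity, with `|S ∩ R₁| = d₁` and `|S ∩ R₂| = d₂`. -/
theorem transversal_card_splits {R : Type*} [Ring R] [Fintype R]
    (N : Set R)
    (hN0 : (0 : R) ∈ N)
    (hNadd : ∀ x ∈ N, ∀ y ∈ N, x + y ∈ N)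
    (hNneg : ∀ x ∈ N, -x ∈ N)
    (hNmul : ∀ x ∈ N, ∀ r : R, r * x ∈ N ∧ x * r ∈ N)
    (hNnil : ∀ x ∈ N, ∃ t : ℕ, 0 < t ∧ x ^ t = 0)
    (S : Set R)
    (hStrans : ∀ r : R, ∃! s, s ∈ S ∧ s - r ∈ N)
    (hSmul : ∀ x ∈ S, ∀ y ∈ S, x * y ∈ S)
    (d₁ d₂ : ℕ) (hd₁ : 2 ≤ d₁) (hd₂ : 2 ≤ d₂)
    (hcop : Nat.Coprime d₁ d₂)
    (hcard : S.ncard = d₁ * d₂) :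
    ∃ R₁ R₂ : AddSubgroup R,
      (∀ r : R, ∀ x ∈ R₁, r * x ∈ R₁ ∧ x * r ∈ R₁) ∧
      (∀ r : R, ∀ x ∈ R₂, r * x ∈ R₂ ∧ x * r ∈ R₂) ∧
      IsCompl R₁ R₂ ∧
      (∃ e₁ ∈ R₁, ∀ x ∈ R₁, e₁ * x = x ∧ x * e₁ = x) ∧
      (∃ e₂ ∈ R₂, ∀ x ∈ R₂, e₂ * x = x ∧ x * e₂ = x) ∧
      (S ∩ (R₁ : Set R)).ncard = d₁ ∧ (S ∩ (R₂ : Set R)).ncard = d₂ := by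
  classical
  haveI : Nonempty R := ⟨0⟩
  have hNsub : ∀ x ∈ N, ∀ y ∈ N, x - y ∈ N := fun x hx y hy => by
    rw [sub_eq_add_neg]; exact hNadd x hx _ (hNneg y hy)
  choose σ hσ using fun r => (hStrans r).exists
  have hσS : ∀ r, σ r ∈ S := fun r => (hσ r).1
  have hσN : ∀ r, σ r - r ∈ N := fun r => (hσ r).2
  have hσu : ∀ r s, s ∈ S → s - r ∈ N → s = σ r := by
    intro r s hs hn
    obtain ⟨t, _, hu⟩ := hStrans r
    rw [hu s ⟨hs, hn⟩, hu (σ r) ⟨hσS r, hσN r⟩]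
  have Lfix : ∀ s ∈ S, σ s = s := fun s hs =>
    (hσu s s hs (by simpa using hN0)).symm
  have L1 : ∀ s ∈ S, ∀ t ∈ S, s - t ∈ N → s = t := by
    intro s hs t ht h
    rw [hσu t s hs h, Lfix t ht]
  have Lcong : ∀ x y : R, x - y ∈ N → σ x = σ y := by
    intro x y h
    refine hσu y (σ x) (hσS x) ?_
    have := hNadd _ (hσN x) _ h
    rwa [sub_add_sub_cancel] at this
  have Lnil : ∀ x ∈ N, x * x = x → x = 0 := by
    intro x hx hid
    obtain ⟨t, ht, h0⟩ := hNnil x hx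
    have hpow : ∀ k : ℕ, x ^ (k + 1) = x := by
      intro k
      induction k with
      | zero => simp
      | succ k ih => rw [pow_succ, ih, hid]
    obtain ⟨t', rfl⟩ : ∃ t', t = t' + 1 := ⟨t - 1, by omega⟩
    rw [hpow t'] at h0
    exact h0
  have h0S : (0 : R) ∈ S := by
    have hzN : σ 0 ∈ N := by simpa using hσN 0
    have heq : σ 0 * σ 0 = σ 0 :=
      L1 _ (hSmul _ (hσS 0) _ (hσS 0)) _ (hσS 0)
        (hNsub _ ((hNmul _ hzN (σ 0)).1) _ hzN)
    have := Lnil (σ 0) hzN heq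
    rw [← this]; exact hσS 0
  -- arithmetic setup
  set c : ℕ := Nat.card R with hc
  have hc0 : c ≠ 0 := Nat.card_pos.ne'
  have hcR : ∀ x : R, c • x = 0 := fun x => card_nsmul_eq_zero'
  set c₁ : ℕ := Nat.gcd c (d₁ ^ c) with hc₁
  set c₂ : ℕ := c / c₁ with hc₂
  have hc₁c₂ : c₁ * c₂ = c := Nat.mul_div_cancel' (Nat.gcd_dvd_left _ _)
  have hc₂d₁ : ∀ p : ℕ, p.Prime → p ∣ c₂ → ¬p ∣ d₁ := fun p hp h hd =>
    aux_not_dvd c d₁ p hc0 hp hd h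
  have hc₁d₁ : ∀ p : ℕ, p.Prime → p ∣ c₁ → p ∣ d₁ := fun p hp h =>
    hp.dvd_of_dvd_pow (h.trans (Nat.gcd_dvd_right _ _))
  have hcop12 : Nat.Coprime c₁ c₂ := by
    by_contra h
    obtain ⟨p, hp, h1, h2⟩ := Nat.Prime.not_coprime_iff_dvd.1 h
    exact hc₂d₁ p hp h2 (hc₁d₁ p hp h1)
  obtain ⟨m₀, hm₀1, hm₀2⟩ := Nat.chineseRemainder hcop12 1 0
  set m : ℕ := m₀ + c with hmdef
  have hmge : 1 ≤ m := by have := Nat.pos_of_ne_zero hc0; omega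
  have hm1 : m ≡ 1 [MOD c₁] := by
    have : c ≡ 0 [MOD c₁] := (Nat.modEq_zero_iff_dvd).2 ⟨c₂, hc₁c₂.symm⟩
    simpa using hm₀1.add this
  have hm0 : m ≡ 0 [MOD c₂] := by
    have : c ≡ 0 [MOD c₂] := (Nat.modEq_zero_iff_dvd).2 ⟨c₁, by rw [← hc₁c₂]; ring⟩
    simpa using hm₀2.add this
  have hc₁m : c₁ ∣ m - 1 := (Nat.modEq_iff_dvd' hmge).1 hm1.symm
  have hc₂m : c₂ ∣ m := Nat.modEq_zero_iff_dvd.1 hm0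
  -- casting facts
  have hcR0 : (c : R) = 0 := by
    have := hcR (1 : R); rwa [nsmul_eq_mul, mul_one] at this
  have hcast : ∀ a b : ℕ, a ≡ b [MOD c] → ((a : R) = (b : R)) := by
    intro a b h
    rcases le_total a b with hab | hab
    · obtain ⟨t, ht⟩ := (Nat.modEq_iff_dvd' hab).1 h
      have : b = a + c * t := by omega
      rw [this]; push_cast [hcR0]; simp
    · obtain ⟨t, ht⟩ := (Nat.modEq_iff_dvd' hab).1 h.symm
      have : a = b + c * t := by omega
      rw [this]; push_cast [hcR0]; simp
  set e : R := (m : R) with he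
  have hcomm : ∀ x : R, e * x = x * e := fun x => (Nat.cast_commute m x).eq
  have he2 : e * e = e := by
    rw [he, ← Nat.cast_mul]
    apply hcast
    have hdvd : c ∣ m * m - m := by
      have h1 : (m - 1) * m = m * m - m := by
        rw [Nat.sub_mul, one_mul]
      rw [← hc₁c₂, ← h1]
      exact mul_dvd_mul hc₁m hc₂m
    have hle : m ≤ m * m := Nat.le_mul_of_pos_left m (by omega)
    exact ((Nat.modEq_iff_dvd' hle).2 hdvd).symm
  -- the two ideals
  set G₁ : AddSubgroup R :=
    { carrier := {x : R | e * x = x}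
      add_mem' := by
        intro a b ha hb
        simp only [Set.mem_setOf_eq] at *
        rw [mul_add, ha, hb]
      zero_mem' := by simp
      neg_mem' := by
        intro a ha
        simp only [Set.mem_setOf_eq] at *
        rw [mul_neg, ha] } with hG₁
  set G₂ : AddSubgroup R :=
    { carrier := {x : R | e * x = 0}
      add_mem' := by
        intro a b ha hb
        simp only [Set.mem_setOf_eq] at *
        rw [mul_add, ha, hb, add_zero]
      zero_mem' := by simp
      neg_mem' := by
        intro a ha
        simp only [Set.mem_setOf_eq] at *
        rw [mul_neg, ha, neg_zero] } with hG₂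
  have memG₁ : ∀ x : R, x ∈ G₁ ↔ e * x = x := fun x => Iff.rfl
  have memG₂ : ∀ x : R, x ∈ G₂ ↔ e * x = 0 := fun x => Iff.rfl
  -- e ∈ S
  have heS : e ∈ S := by
    set f : R := σ e with hf
    have hfS : f ∈ S := hσS e
    have hfN : f - e ∈ N := hσN e
    have hff : f * f = f := by
      apply L1 _ (hSmul _ hfS _ hfS) _ hfS
      have h1 : f * f - e = f * (f - e) + (f - e) * e := by
        rw [mul_sub, sub_mul, he2]; abel
      have h2 : f * f - f = (f * f - e) - (f - e) := by abel
      rw [h2, h1]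
      exact hNsub _ (hNadd _ ((hNmul _ hfN f).1) _ ((hNmul _ hfN e).2)) _ hfN
    have hd'N : f - e * f ∈ N := by
      have h1 : f - e * f = (f - e) - e * (f - e) := by rw [mul_sub, he2]; abel
      rw [h1]
      exact hNsub _ hfN _ ((hNmul _ hfN e).1)
    have hd'2 : (f - e * f) * (f - e * f) = f - e * f := by
      have h1 : f * (e * f) = e * f := by
        rw [← mul_assoc, ← hcomm f, mul_assoc, hff]
      have h2 : (e * f) * f = e * f := by rw [mul_assoc, hff]
      have h3 : (e * f) * (e * f) = e * f := by
        rw [mul_assoc, ← mul_assoc f e f, ← hcomm f, mul_assoc, hff, ← mul_assoc, he2]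
      rw [sub_mul, mul_sub, mul_sub, hff, h1, h2, h3]
      abel
    have hef : e * f = f := by
      have := Lnil _ hd'N hd'2
      rwa [sub_eq_zero, eq_comm] at this
    have hg'N : e - f ∈ N := by
      have := hNneg _ hfN; rwa [neg_sub] at this
    have hg'2 : (e - f) * (e - f) = e - f := by
      rw [sub_mul, mul_sub, mul_sub, he2, hef, ← hcomm f, hef, hff]
      abel
    have : e - f = 0 := Lnil _ hg'N hg'2
    have hfe : e = f := by rwa [sub_eq_zero] at this
    rw [hfe]; exact hfS
  -- representative lemmas
  have Lrep₁ : ∀ x : R, e * x = x → e * σ x = σ x := by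
    intro x hx
    apply L1 _ (hSmul _ heS _ (hσS x)) _ (hσS x)
    have h1 : e * σ x - σ x = e * (σ x - x) - (σ x - x) := by
      rw [mul_sub, hx]; abel
    rw [h1]
    exact hNsub _ ((hNmul _ (hσN x) e).1) _ (hσN x)
  have Lrep₂ : ∀ x : R, e * x = 0 → e * σ x = 0 := by
    intro x hx
    apply L1 _ (hSmul _ heS _ (hσS x)) _ h0S
    have h1 : e * σ x - 0 = e * (σ x - x) := by rw [mul_sub, hx]
    rw [h1]
    exact (hNmul _ (hσN x) e).1
  have hmul_e : ∀ x : R, e * (e * x) = e * x := fun x => by rw [← mul_assoc, he2]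
  -- the intersections
  set T₁ : Set R := S ∩ (G₁ : Set R) with hT₁
  set T₂ : Set R := S ∩ (G₂ : Set R) with hT₂
  have hT₁mem : ∀ x : R, x ∈ T₁ ↔ x ∈ S ∧ e * x = x := fun x => Iff.rfl
  have hT₂mem : ∀ x : R, x ∈ T₂ ↔ x ∈ S ∧ e * x = 0 := fun x => Iff.rfl
  -- first bijection : S ≃ T₁ × T₂
  let E₁ : ↥S ≃ ↥T₁ × ↥T₂ :=
    { toFun := fun s =>
        (⟨σ (e * s.1), (hT₁mem _).2 ⟨hσS _, Lrep₁ _ (hmul_e s.1)⟩⟩,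
         ⟨σ (s.1 - e * s.1), (hT₂mem _).2 ⟨hσS _,
            Lrep₂ _ (by rw [mul_sub, hmul_e, sub_self])⟩⟩)
      invFun := fun p => ⟨σ (p.1.1 + p.2.1), hσS _⟩
      left_inv := by
        rintro ⟨s, hs⟩
        apply Subtype.ext
        show σ (σ (e * s) + σ (s - e * s)) = s
        have hmem : (σ (e * s) + σ (s - e * s)) - (e * s + (s - e * s)) ∈ N := by
          have h1 : (σ (e * s) + σ (s - e * s)) - (e * s + (s - e * s))
              = (σ (e * s) - e * s) + (σ (s - e * s) - (s - e * s)) := by abel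
          rw [h1]
          exact hNadd _ (hσN _) _ (hσN _)
        rw [Lcong _ _ hmem]
        have h2 : e * s + (s - e * s) = s := by abel
        rw [h2, Lfix s hs]
      right_inv := by
        rintro ⟨⟨a, haS, haG⟩, ⟨b, hbS, hbG⟩⟩
        have ha : e * a = a := haG
        have hb : e * b = 0 := hbG
        have htN : σ (a + b) - (a + b) ∈ N := hσN _
        have c1 : σ (e * σ (a + b)) = a := by
          have h1 : e * σ (a + b) - e * (a + b) ∈ N := by
            rw [← mul_sub]; exact (hNmul _ htN e).1
          have h3 : e * (a + b) = a := by rw [mul_add, ha, hb, add_zero]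
          rw [Lcong _ _ h1, h3, Lfix a haS]
        have c2 : σ (σ (a + b) - e * σ (a + b)) = b := by
          have h1 : (σ (a + b) - e * σ (a + b)) - ((a + b) - e * (a + b))
              = (σ (a + b) - (a + b)) - e * (σ (a + b) - (a + b)) := by
            rw [mul_sub]; abel
          have hmem : (σ (a + b) - e * σ (a + b)) - ((a + b) - e * (a + b)) ∈ N := by
            rw [h1]; exact hNsub _ htN _ ((hNmul _ htN e).1)
          have h3 : (a + b) - e * (a + b) = b := by
            rw [mul_add, ha, hb, add_zero]; abel
          rw [Lcong _ _ hmem, h3, Lfix b hbS]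
        simp only [Prod.mk.injEq]
        exact ⟨Subtype.ext c1, Subtype.ext c2⟩ }
  have hcard1 : T₁.ncard * T₂.ncard = d₁ * d₂ := by
    have h1 : Nat.card ↥S = Nat.card (↥T₁ × ↥T₂) := Nat.card_congr E₁
    rw [Nat.card_prod, Nat.card_coe_set_eq, Nat.card_coe_set_eq,
      Nat.card_coe_set_eq] at h1
    rw [← h1]; exact hcard
  -- second bijection : G₁ ≃ T₁ × (N ∩ G₁)
  set NG₁ : Set R := N ∩ (G₁ : Set R) with hNG₁
  let E₂ : ↥(G₁ : Set R) ≃ ↥T₁ × ↥NG₁ :=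
    { toFun := fun x =>
        (⟨σ x.1, (hT₁mem _).2 ⟨hσS _, Lrep₁ _ x.2⟩⟩,
         ⟨σ x.1 - x.1, ⟨hσN _, show e * (σ x.1 - x.1) = σ x.1 - x.1 by
            have hx : e * x.1 = x.1 := x.2
            rw [mul_sub, Lrep₁ _ x.2, hx]⟩⟩)
      invFun := fun p => ⟨p.1.1 - p.2.1, by
        have h1 : e * p.1.1 = p.1.1 := p.1.2.2
        have h2 : e * p.2.1 = p.2.1 := p.2.2.2
        show e * (p.1.1 - p.2.1) = p.1.1 - p.2.1
        rw [mul_sub, h1, h2]⟩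
      left_inv := by
        rintro ⟨x, hx⟩
        apply Subtype.ext
        show σ x - (σ x - x) = x
        abel
      right_inv := by
        rintro ⟨⟨a, haS, haG⟩, ⟨n, hnN, hnG⟩⟩
        have c1 : σ (a - n) = a := by
          have h1 : (a - n) - a ∈ N := by
            have : (a - n) - a = -n := by abel
            rw [this]; exact hNneg _ hnN
          rw [Lcong _ _ h1, Lfix a haS]
        have c2 : σ (a - n) - (a - n) = n := by rw [c1]; abel
        simp only [Prod.mk.injEq]
        exact ⟨Subtype.ext c1, Subtype.ext c2⟩ }
  have hcard2 : Nat.card ↥(G₁ : Set R) = T₁.ncard * NG₁.ncard := by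
    have h1 := Nat.card_congr E₂
    rw [Nat.card_prod, Nat.card_coe_set_eq, Nat.card_coe_set_eq] at h1
    exact h1
  -- third bijection : G₂ ≃ T₂ × (N ∩ G₂)
  set NG₂ : Set R := N ∩ (G₂ : Set R) with hNG₂
  let E₃ : ↥(G₂ : Set R) ≃ ↥T₂ × ↥NG₂ :=
    { toFun := fun x =>
        (⟨σ x.1, (hT₂mem _).2 ⟨hσS _, Lrep₂ _ x.2⟩⟩,
         ⟨σ x.1 - x.1, ⟨hσN _, show e * (σ x.1 - x.1) = 0 by
            have hx : e * x.1 = 0 := x.2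
            rw [mul_sub, Lrep₂ _ x.2, hx, sub_zero]⟩⟩)
      invFun := fun p => ⟨p.1.1 - p.2.1, by
        have h1 : e * p.1.1 = 0 := p.1.2.2
        have h2 : e * p.2.1 = 0 := p.2.2.2
        show e * (p.1.1 - p.2.1) = 0
        rw [mul_sub, h1, h2, sub_zero]⟩
      left_inv := by
        rintro ⟨x, hx⟩
        apply Subtype.ext
        show σ x - (σ x - x) = x
        abel
      right_inv := by
        rintro ⟨⟨a, haS, haG⟩, ⟨n, hnN, hnG⟩⟩
        have c1 : σ (a - n) = a := by
          have h1 : (a - n) - a ∈ N := by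
            have : (a - n) - a = -n := by abel
            rw [this]; exact hNneg _ hnN
          rw [Lcong _ _ h1, Lfix a haS]
        have c2 : σ (a - n) - (a - n) = n := by rw [c1]; abel
        simp only [Prod.mk.injEq]
        exact ⟨Subtype.ext c1, Subtype.ext c2⟩ }
  have hcard3 : Nat.card ↥(G₂ : Set R) = T₂.ncard * NG₂.ncard := by
    have h1 := Nat.card_congr E₃
    rw [Nat.card_prod, Nat.card_coe_set_eq, Nat.card_coe_set_eq] at h1
    exact h1
  -- prime divisors of |T₁| divide d₁
  have hprime₁ : ∀ p : ℕ, p.Prime → p ∣ T₁.ncard → p ∣ d₁ := by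
    intro p hp hpT
    haveI : Fact p.Prime := ⟨hp⟩
    have hpG : p ∣ Fintype.card ↥G₁ := by
      rw [← Nat.card_eq_fintype_card]
      have : Nat.card ↥(G₁ : Set R) = Nat.card ↥G₁ := rfl
      rw [← this, hcard2]
      exact hpT.mul_right _
    obtain ⟨x, hx⟩ := exists_prime_addOrderOf_dvd_card p hpG
    have hxc : addOrderOf x ∣ c := by
      apply addOrderOf_dvd_of_nsmul_eq_zero
      apply Subtype.ext
      rw [AddSubmonoidClass.coe_nsmul]
      exact hcR _
    have hxm : m • (x : R) = (x : R) := by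
      rw [nsmul_eq_mul]
      exact x.2
    have hxm1 : addOrderOf x ∣ m - 1 := by
      apply addOrderOf_dvd_of_nsmul_eq_zero
      apply Subtype.ext
      rw [AddSubmonoidClass.coe_nsmul]
      have h1 : (m - 1) • (x : R) + (x : R) = (x : R) := by
        have h2 : ((m - 1) + 1) • (x : R) = (m - 1) • (x : R) + (x : R) := by
          rw [add_nsmul, one_nsmul]
        rw [← h2, Nat.sub_add_cancel hmge, hxm]
      have := add_right_cancel (h1.trans (zero_add (x : R)).symm)
      simpa using this
    rw [hx] at hxc hxm1
    rw [← hc₁c₂] at hxc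
    rcases (Nat.Prime.dvd_mul hp).1 hxc with h | h
    · exact hc₁d₁ p hp h
    · exfalso
      have hpm : p ∣ m := h.trans hc₂m
      have : p ∣ m - (m - 1) := Nat.dvd_sub hpm hxm1
      rw [show m - (m - 1) = 1 by omega] at this
      exact hp.one_lt.ne' (Nat.eq_one_of_dvd_one this)
  -- |T₂| is coprime to d₁
  have hcop₂ : Nat.Coprime T₂.ncard d₁ := by
    by_contra h
    obtain ⟨p, hp, hpT, hpd⟩ := Nat.Prime.not_coprime_iff_dvd.1 h
    haveI : Fact p.Prime := ⟨hp⟩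
    have hpG : p ∣ Fintype.card ↥G₂ := by
      rw [← Nat.card_eq_fintype_card]
      have : Nat.card ↥(G₂ : Set R) = Nat.card ↥G₂ := rfl
      rw [← this, hcard3]
      exact hpT.mul_right _
    obtain ⟨x, hx⟩ := exists_prime_addOrderOf_dvd_card p hpG
    have hxc : addOrderOf x ∣ c := by
      apply addOrderOf_dvd_of_nsmul_eq_zero
      apply Subtype.ext
      rw [AddSubmonoidClass.coe_nsmul]
      exact hcR _
    have hxm : addOrderOf x ∣ m := by
      apply addOrderOf_dvd_of_nsmul_eq_zero
      apply Subtype.ext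
      rw [AddSubmonoidClass.coe_nsmul]
      rw [nsmul_eq_mul]
      exact x.2
    rw [hx] at hxc hxm
    rw [← hc₁c₂] at hxc
    rcases (Nat.Prime.dvd_mul hp).1 hxc with h' | h'
    · have hpm1 : p ∣ m - 1 := h'.trans hc₁m
      have : p ∣ m - (m - 1) := Nat.dvd_sub hxm hpm1
      rw [show m - (m - 1) = 1 by omega] at this
      exact hp.one_lt.ne' (Nat.eq_one_of_dvd_one this)
    · exact hc₂d₁ p hp h' hpd
  -- conclude the cardinalities
  have hT₁0 : T₁.ncard ≠ 0 := by
    intro h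
    rw [h, zero_mul] at hcard1
    have : 0 < d₁ * d₂ := Nat.mul_pos (by omega) (by omega)
    omega
  have hT₁dvd : T₁.ncard ∣ d₁ ^ T₁.ncard :=
    aux_smooth_dvd_pow d₁ _ hT₁0 hprime₁
  have hfinal₁ : T₁.ncard = d₁ := by
    have hA : Nat.gcd (T₁.ncard * T₂.ncard) (d₁ ^ T₁.ncard) = T₁.ncard := by
      rw [Nat.Coprime.gcd_mul_right_cancel _ (hcop₂.pow_right _)]
      exact Nat.gcd_eq_left hT₁dvd
    have hB : Nat.gcd (d₁ * d₂) (d₁ ^ T₁.ncard) = d₁ := by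
      rw [Nat.Coprime.gcd_mul_right_cancel _ ((hcop.symm).pow_right _)]
      exact Nat.gcd_eq_left (dvd_pow_self d₁ hT₁0)
    rw [← hA, hcard1, hB]
  have hfinal₂ : T₂.ncard = d₂ := by
    rw [hfinal₁] at hcard1
    exact Nat.eq_of_mul_eq_mul_left (by omega) hcard1
  -- assemble
  refine ⟨G₁, G₂, ?_, ?_, ?_, ?_, ?_, hfinal₁, hfinal₂⟩
  · intro r x hx
    have hx' : e * x = x := hx
    constructor
    · show e * (r * x) = r * x
      rw [← mul_assoc, hcomm r, mul_assoc, hx']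
    · show e * (x * r) = x * r
      rw [← mul_assoc, hx']
  · intro r x hx
    have hx' : e * x = 0 := hx
    constructor
    · show e * (r * x) = 0
      rw [← mul_assoc, hcomm r, mul_assoc, hx', mul_zero]
    · show e * (x * r) = 0
      rw [← mul_assoc, hx', zero_mul]
  · constructor
    · rw [AddSubgroup.disjoint_def]
      intro x hx1 hx2
      have h1 : e * x = x := hx1
      have h2 : e * x = 0 := hx2
      rw [← h1, h2]
    · rw [codisjoint_iff, eq_top_iff]
      intro x _
      have hx1 : e * x ∈ G₁ := hmul_e x
      have hx2 : x - e * x ∈ G₂ := by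
        show e * (x - e * x) = 0
        rw [mul_sub, hmul_e, sub_self]
      have : x = e * x + (x - e * x) := by abel
      rw [this]
      exact AddSubgroup.add_mem _ (AddSubgroup.mem_sup_left hx1)
        (AddSubgroup.mem_sup_right hx2)
  · refine ⟨e, he2, ?_⟩
    intro x hx
    have hx' : e * x = x := hx
    exact ⟨hx', by rw [← hcomm x, hx']⟩
  · refine ⟨1 - e, ?_, ?_⟩
    · show e * (1 - e) = 0
      rw [mul_sub, mul_one, he2, sub_self]
    · intro x hx
      have hx' : e * x = 0 := hx
      constructor
      · rw [sub_mul, one_mul, hx', sub_zero]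
      · rw [mul_sub, mul_one, ← hcomm x, hx', sub_zero]
end

section
/- If there exist t mutually unbiased orthonormal bases in ℂ^{N₁} and t mutually unbiased orthonormal bases in ℂ^{N₂}, then there exist t mutually unbiased orthonormal bases in ℂ^{N₁·N₂}, obtained by tensoring the corresponding bases. -/
lemma inner_tensor {N₁ N₂ : ℕ} (x x' : EuclideanSpace ℂ (Fin N₁))
    (y y' : EuclideanSpace ℂ (Fin N₂)) (v w : EuclideanSpace ℂ (Fin N₁ × Fin N₂))
    (hv : ∀ p, v p = x p.1 * y p.2) (hw : ∀ p, w p = x' p.1 * y' p.2) :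
    (inner ℂ v w : ℂ) = (inner ℂ x x' : ℂ) * inner ℂ y y' := by
  simp only [PiLp.inner_apply, RCLike.inner_apply, hv, hw]
  rw [Fintype.sum_prod_type, Finset.sum_mul_sum]
  simp only [map_mul, Finset.mul_sum]
  congr 1; ext p; congr 1; ext q; ring

/-- Given `t` mutually unbiased orthonormal bases of `ℂ^{N₁}` and `t` mutually
unbiased orthonormal bases of `ℂ^{N₂}`, tensoring corresponding bases yields
`t` mutually unbiased orthonormal bases of `ℂ^{N₁·N₂}`. -/
theorem mub_tensor_product (N₁ N₂ t : ℕ)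
    (a : Fin t → Fin N₁ → EuclideanSpace ℂ (Fin N₁))
    (b : Fin t → Fin N₂ → EuclideanSpace ℂ (Fin N₂))
    (ha : ∀ c, Orthonormal ℂ (a c))
    (hb : ∀ c, Orthonormal ℂ (b c))
    (hamub : ∀ c c' : Fin t, c ≠ c' → ∀ i k,
      ‖(inner ℂ (a c i) (a c' k) : ℂ)‖ = 1 / Real.sqrt N₁)
    (hbmub : ∀ c c' : Fin t, c ≠ c' → ∀ j l,
      ‖(inner ℂ (b c j) (b c' l) : ℂ)‖ = 1 / Real.sqrt N₂) :
    ∃ v : Fin t → (Fin N₁ × Fin N₂) → EuclideanSpace ℂ (Fin N₁ × Fin N₂),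
      (∀ c i j, ∀ p : Fin N₁ × Fin N₂, v c (i, j) p = a c i p.1 * b c j p.2) ∧
      (∀ c, Orthonormal ℂ (v c)) ∧
      (∀ c c' : Fin t, c ≠ c' → ∀ q q' : Fin N₁ × Fin N₂,
        ‖(inner ℂ (v c q) (v c' q') : ℂ)‖ = 1 / Real.sqrt (N₁ * N₂)) := by
  refine ⟨fun c q => (WithLp.toLp 2 (fun p : Fin N₁ × Fin N₂ => a c q.1 p.1 * b c q.2 p.2) : EuclideanSpace ℂ (Fin N₁ × Fin N₂)),
    fun c i j p => rfl, ?_, ?_⟩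
  · intro c
    rw [orthonormal_iff_ite]
    intro q q'
    rw [inner_tensor (a c q.1) (a c q'.1) (b c q.2) (b c q'.2) _ _ (fun p => rfl) (fun p => rfl),
      orthonormal_iff_ite.mp (ha c), orthonormal_iff_ite.mp (hb c)]
    by_cases h1 : q.1 = q'.1 <;> by_cases h2 : q.2 = q'.2 <;>
      simp [h1, h2, Prod.ext_iff]
  · intro c c' hcc q q'
    rw [inner_tensor (a c q.1) (a c' q'.1) (b c q.2) (b c' q'.2) _ _ (fun p => rfl) (fun p => rfl),
      norm_mul, hamub c c' hcc, hbmub c c' hcc, Real.sqrt_mul (Nat.cast_nonneg _)]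
    ring
end
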